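/- arXiv:2310.06172 — 5 statements merged into one kernel-verified Lean document; each statement's English description precedes it below -/
import Mathlib

section
/- Gale duality, Farkas form (the linear-programming content of Theorem 2.4 of Braden–Licata–Proudfoot–Webster used to define stability of sign vectors): Let V be a linear subspace of ℝⁿ, let t ∈ ℝⁿ, and let α : Fin n → Bool be a sign vector with associated closed orthant O_α. Then the chamber (t + V) ∩ O_α is nonempty if and only if ⟨t, y⟩ ≥ 0 for every y ∈ V^⊥ ∩ O_α, where V^⊥ is the orthogonal complement of V. -/
open scoped RealInnerProductSpace
open Finset

open scoped RealInnerProductSpace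
open Finset

section Cones

variable {E : Type*} [NormedAddCommGroup E] [NormedSpace ℝ E]
variable {ι : Type*}

/-- Nonnegative combinations of the vectors `g i`, `i ∈ t`. -/
def coneOn (t : Finset ι) (g : ι → E) : Set E :=
  {x | ∃ c : ι → ℝ, (∀ i ∈ t, 0 ≤ c i) ∧ x = ∑ i ∈ t, c i • g i}

lemma caratheodory_cone [DecidableEq ι] (g : ι → E) :
    ∀ t : Finset ι, ∀ x ∈ coneOn t g,
      ∃ u ⊆ t, LinearIndependent ℝ (fun i : u => g i) ∧ x ∈ coneOn u g := by
  intro t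
  induction t using Finset.strongInduction with
  | _ t ih =>
    intro x hx
    by_cases hli : LinearIndependent ℝ (fun i : t => g i)
    · exact ⟨t, le_refl _, hli, hx⟩
    obtain ⟨c, hc0, rfl⟩ := hx
    obtain ⟨d, hdsum, j, hdj⟩ := Fintype.not_linearIndependent_iff.mp hli
    set d' : ι → ℝ := fun i => if h : i ∈ t then d ⟨i, h⟩ else 0 with hd'
    have hd'sum : ∑ i ∈ t, d' i • g i = 0 := by
      rw [← hdsum, ← Finset.sum_attach t (fun i => d' i • g i)]
      refine Finset.sum_congr rfl fun i _ => ?_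
      simp [hd', i.2]
    have hd'j : d' (j : ι) ≠ 0 := by simpa [hd', j.2] using hdj
    -- choose `e` to be `d'` or `-d'` so that it has a positive value on `t`
    obtain ⟨e, hesum, i₁, hi₁t, hi₁pos⟩ :
        ∃ e : ι → ℝ, (∑ i ∈ t, e i • g i = 0) ∧ ∃ i ∈ t, 0 < e i := by
      rcases lt_or_gt_of_ne hd'j with hneg | hpos
      · exact ⟨fun i => -d' i,
          by simp only [neg_smul, Finset.sum_neg_distrib, hd'sum, neg_zero], j, j.2,
          by simpa using hneg⟩
      · exact ⟨d', hd'sum, j, j.2, hpos⟩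
    set s' := t.filter (fun i => 0 < e i) with hs'
    have hs'ne : s'.Nonempty := ⟨i₁, by simp [hs', hi₁t, hi₁pos]⟩
    obtain ⟨i₀, hi₀, hmin⟩ := s'.exists_min_image (fun i => c i / e i) hs'ne
    have hi₀t : i₀ ∈ t := (Finset.mem_filter.mp hi₀).1
    have hi₀pos : 0 < e i₀ := (Finset.mem_filter.mp hi₀).2
    set r := c i₀ / e i₀ with hr
    have hr0 : 0 ≤ r := div_nonneg (hc0 _ hi₀t) hi₀pos.le
    set c' : ι → ℝ := fun i => c i - r * e i with hc'
    have hc'0 : ∀ i ∈ t, 0 ≤ c' i := by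
      intro i hit
      by_cases hie : 0 < e i
      · have hmem : i ∈ s' := Finset.mem_filter.mpr ⟨hit, hie⟩
        have := hmin i hmem
        have : r * e i ≤ c i := by
          rw [hr]
          calc c i₀ / e i₀ * e i ≤ c i / e i * e i := by
                exact mul_le_mul_of_nonneg_right (hmin i hmem) hie.le
            _ = c i := div_mul_cancel₀ _ hie.ne'
        simpa [hc'] using sub_nonneg.mpr this
      · push_neg at hie
        have : r * e i ≤ 0 := mul_nonpos_of_nonneg_of_nonpos hr0 hie
        have := sub_nonneg.mpr (this.trans (hc0 i hit))
        simpa [hc'] using this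
    have hc'i₀ : c' i₀ = 0 := by
      simp [hc', hr, div_mul_cancel₀ _ hi₀pos.ne']
    have hxsum : ∑ i ∈ t, c i • g i = ∑ i ∈ t, c' i • g i := by
      simp only [hc', sub_smul, mul_smul, Finset.sum_sub_distrib]
      rw [← Finset.smul_sum, hesum, smul_zero, sub_zero]
    have hxsum2 : ∑ i ∈ t, c i • g i = ∑ i ∈ t.erase i₀, c' i • g i := by
      rw [hxsum, ← Finset.add_sum_erase t _ hi₀t, hc'i₀, zero_smul, zero_add]
    obtain ⟨u, hu, huli, humem⟩ := ih (t.erase i₀) (Finset.erase_ssubset hi₀t) _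
      ⟨c', fun i hi => hc'0 i (Finset.mem_of_mem_erase hi), hxsum2⟩
    exact ⟨u, hu.trans (Finset.erase_subset _ _), huli, humem⟩

lemma coneOn_isClosed (t : Finset ι) (g : ι → E)
    (h : LinearIndependent ℝ (fun i : t => g i)) : IsClosed (coneOn t g) := by
  classical
  let φ : (t → ℝ) →ₗ[ℝ] E :=
    { toFun := fun c => ∑ i : t, c i • g (i : ι)
      map_add' := fun a b => by simp [add_smul, Finset.sum_add_distrib]
      map_smul' := fun r a => by simp [smul_smul, Finset.smul_sum]
    }
  have hφinj : LinearMap.ker φ = ⊥ := by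
    rw [LinearMap.ker_eq_bot']
    intro c hc
    funext i
    exact Fintype.linearIndependent_iff.mp h c hc i
  have hφ : Topology.IsClosedEmbedding φ := LinearMap.isClosedEmbedding_of_injective hφinj
  have himg : coneOn t g = φ '' {c : t → ℝ | ∀ i, 0 ≤ c i} := by
    ext x
    constructor
    · rintro ⟨c, hc0, rfl⟩
      refine ⟨fun i => c i, fun i => hc0 i i.2, ?_⟩
      exact Finset.sum_coe_sort t (fun i => c i • g i)
    · rintro ⟨c, hc0, rfl⟩
      refine ⟨fun i => if h : i ∈ t then c ⟨i, h⟩ else 0, fun i hi => by simpa [hi] using hc0 ⟨i, hi⟩, ?_⟩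
      show _ = ∑ i ∈ t, (if h : i ∈ t then c ⟨i, h⟩ else 0) • g i
      rw [← Finset.sum_attach t (fun i => (if h : i ∈ t then c ⟨i, h⟩ else 0) • g i)]
      refine (Finset.sum_congr rfl fun i _ => ?_)
      simp [i.2]
  rw [himg]
  refine hφ.isClosedMap _ ?_
  have : {c : t → ℝ | ∀ i, 0 ≤ c i} = ⋂ i, {c : t → ℝ | 0 ≤ c i} := by
    ext; simp [Set.mem_iInter]
  rw [this]
  exact isClosed_iInter fun i => isClosed_le continuous_const (continuous_apply i)

lemma coneOn_mono [DecidableEq ι] {u t : Finset ι} (h : u ⊆ t) (g : ι → E) :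
    coneOn u g ⊆ coneOn t g := by
  rintro x ⟨c, hc0, rfl⟩
  refine ⟨fun i => if i ∈ u then c i else 0, fun i _ => ?_, ?_⟩
  · by_cases hiu : i ∈ u
    · simpa [hiu] using hc0 i hiu
    · simp [hiu]
  rw [← Finset.sum_subset h (fun i _ hiu => by simp [hiu])]
  exact Finset.sum_congr rfl fun i hi => by simp [hi]

lemma coneOn_univ_isClosed [Fintype ι] [DecidableEq ι] (g : ι → E) :
    IsClosed (coneOn (Finset.univ : Finset ι) g) := by
  have : coneOn (Finset.univ : Finset ι) g =
      ⋃ (u : Finset ι) (_ : LinearIndependent ℝ (fun i : u => g i)), coneOn u g := by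
    ext x
    simp only [Set.mem_iUnion]
    constructor
    · intro hx
      obtain ⟨u, _, huli, humem⟩ := caratheodory_cone g Finset.univ x hx
      exact ⟨u, huli, humem⟩
    · rintro ⟨u, -, hx⟩
      exact coneOn_mono (Finset.subset_univ u) g hx
  rw [this]
  exact isClosed_iUnion_of_finite fun u => isClosed_iUnion_of_finite fun _ => coneOn_isClosed u g ‹_›

end Cones

/-- The closed orthant associated to a sign vector `α : Fin n → Bool`. -/
def orthant {n : ℕ} (α : Fin n → Bool) : Set (EuclideanSpace ℝ (Fin n)) :=
  {x | ∀ i, (α i = true → 0 ≤ x i) ∧ (α i = false → x i ≤ 0)}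

section Main

variable {n : ℕ}

/-- Generators of the cone `O_α + V`. -/
noncomputable def gens (V : Submodule ℝ (EuclideanSpace ℝ (Fin n))) (α : Fin n → Bool) :
    Fin n ⊕ (Fin (Module.finrank ℝ V) ⊕ Fin (Module.finrank ℝ V)) → EuclideanSpace ℝ (Fin n)
  | .inl i => EuclideanSpace.single i (if α i then (1 : ℝ) else -1)
  | .inr (.inl j) => (Module.finBasis ℝ V j : EuclideanSpace ℝ (Fin n))
  | .inr (.inr j) => -(Module.finBasis ℝ V j : EuclideanSpace ℝ (Fin n))

lemma single_sum_apply (c : Fin n → ℝ) (σ : Fin n → ℝ) (k : Fin n) :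
    (∑ i : Fin n, c i • EuclideanSpace.single i (σ i)) k = c k * σ k := by
  rw [WithLp.ofLp_sum, Finset.sum_apply]
  rw [Finset.sum_eq_single k]
  · simp [EuclideanSpace.single_apply]
  · intro i _ hik
    simp [EuclideanSpace.single_apply, Ne.symm hik]
  · simp

lemma mem_cone_of (V : Submodule ℝ (EuclideanSpace ℝ (Fin n))) (α : Fin n → Bool)
    {a v : EuclideanSpace ℝ (Fin n)} (ha : a ∈ orthant α) (hv : v ∈ V) :
    a + v ∈ coneOn Finset.univ (gens V α) := by
  classical
  set b := Module.finBasis ℝ V with hb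
  set d : Fin (Module.finrank ℝ V) → ℝ := fun j => b.repr ⟨v, hv⟩ j with hd
  refine ⟨Sum.elim (fun i => if α i then a i else -a i)
    (Sum.elim (fun j => max (d j) 0) (fun j => max (-d j) 0)), ?_, ?_⟩
  · rintro (i | j | j) -
    · by_cases h : α i
      · simpa [h] using (ha i).1 (by simpa using h)
      · simpa [h] using neg_nonneg.mpr ((ha i).2 (by simpa using h))
    · exact le_max_right _ _
    · exact le_max_right _ _
  · rw [Fintype.sum_sum_type, Fintype.sum_sum_type]
    have hA : (∑ i : Fin n, (if α i then a i else -a i) •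
        EuclideanSpace.single i (if α i then (1 : ℝ) else -1)) = a := by
      ext k
      rw [single_sum_apply (fun i => if α i then a i else -a i)
        (fun i => if α i then (1 : ℝ) else -1) k]
      by_cases h : α k <;> simp [h]
    have hV : (∑ j, max (d j) 0 • (b j : EuclideanSpace ℝ (Fin n))) +
        (∑ j, max (-d j) 0 • (-(b j : EuclideanSpace ℝ (Fin n)))) = v := by
      have h1 : ∀ j, max (d j) 0 • (b j : EuclideanSpace ℝ (Fin n)) +
          max (-d j) 0 • (-(b j : EuclideanSpace ℝ (Fin n))) =
          d j • (b j : EuclideanSpace ℝ (Fin n)) := by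
        intro j
        rw [smul_neg, ← sub_eq_add_neg, ← sub_smul]
        congr 1
        exact max_zero_sub_max_neg_zero_eq_self (d j)
      rw [← Finset.sum_add_distrib]
      simp_rw [h1]
      have := congrArg (Subtype.val) (b.sum_repr ⟨v, hv⟩)
      simp only [Submodule.coe_sum, Submodule.coe_smul] at this
      exact this
    simp only [gens, Sum.elim_inl, Sum.elim_inr, ← hb]
    rw [hA, hV]

lemma zero_mem_orthant (α : Fin n → Bool) : (0 : EuclideanSpace ℝ (Fin n)) ∈ orthant α := by
  intro i
  constructor <;> intro _ <;> simp

lemma single_mem_orthant (α : Fin n → Bool) (k : Fin n) :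
    EuclideanSpace.single k (if α k then (1 : ℝ) else -1) ∈ orthant α := by
  intro i
  constructor <;> intro h <;> by_cases hik : i = k
  · subst hik; simp [h]
  · simp [EuclideanSpace.single_apply, hik]
  · subst hik; simp [h]
  · simp [EuclideanSpace.single_apply, hik]

lemma cone_sub (V : Submodule ℝ (EuclideanSpace ℝ (Fin n))) (α : Fin n → Bool)
    {x : EuclideanSpace ℝ (Fin n)} (hx : x ∈ coneOn Finset.univ (gens V α)) :
    ∃ a ∈ orthant α, ∃ v ∈ V, x = a + v := by
  obtain ⟨c, hc0, rfl⟩ := hx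
  set b := Module.finBasis ℝ V with hb
  refine ⟨∑ i : Fin n, c (Sum.inl i) • EuclideanSpace.single i (if α i then (1 : ℝ) else -1),
    ?_,
    (∑ j, c (Sum.inr (Sum.inl j)) • (b j : EuclideanSpace ℝ (Fin n))) +
      ∑ j, c (Sum.inr (Sum.inr j)) • (-(b j : EuclideanSpace ℝ (Fin n))), ?_, ?_⟩
  · intro k
    rw [single_sum_apply (fun i => c (Sum.inl i)) (fun i => if α i then (1 : ℝ) else -1) k]
    constructor <;> intro h
    · simp only [h, if_true]
      simpa using hc0 (Sum.inl k) (Finset.mem_univ _)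
    · simp only [h, Bool.false_eq_true, if_false, mul_neg, mul_one]
      simpa using hc0 (Sum.inl k) (Finset.mem_univ _)
  · refine V.add_mem (Submodule.sum_mem _ fun j _ => V.smul_mem _ (b j).2)
      (Submodule.sum_mem _ fun j _ => V.smul_mem _ (V.neg_mem (b j).2))
  · rw [Fintype.sum_sum_type, Fintype.sum_sum_type]
    simp only [gens, ← hb]

/-- The cone `O_α + V` as a convex cone. -/
noncomputable def galeCone (V : Submodule ℝ (EuclideanSpace ℝ (Fin n))) (α : Fin n → Bool) :
    ConvexCone ℝ (EuclideanSpace ℝ (Fin n)) where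
  carrier := coneOn Finset.univ (gens V α)
  smul_mem' := by
    rintro r hr x ⟨c, hc0, rfl⟩
    exact ⟨fun i => r * c i, fun i hi => mul_nonneg hr.le (hc0 i hi),
      by rw [Finset.smul_sum]; simp [mul_smul]⟩
  add_mem' := by
    rintro x ⟨c, hc0, rfl⟩ y ⟨e, he0, rfl⟩
    exact ⟨fun i => c i + e i, fun i hi => add_nonneg (hc0 i hi) (he0 i hi),
      by simp [add_smul, Finset.sum_add_distrib]⟩

end Main

/-- The chamber `(t + V) ∩ O_α` of the coordinate hyperplane arrangement restricted to
the affine subspace `t + V`. -/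
def chamber {n : ℕ} (V : Submodule ℝ (EuclideanSpace ℝ (Fin n)))
    (t : EuclideanSpace ℝ (Fin n)) (α : Fin n → Bool) : Set (EuclideanSpace ℝ (Fin n)) :=
  ((fun v => t + v) '' (V : Set (EuclideanSpace ℝ (Fin n)))) ∩ orthant α

/-- Gale duality, Farkas form: the chamber `(t + V) ∩ O_α` is nonempty iff
`⟨t, y⟩ ≥ 0` for every `y ∈ V^⊥ ∩ O_α`. -/
theorem gale_duality_farkas {n : ℕ} (V : Submodule ℝ (EuclideanSpace ℝ (Fin n)))
    (t : EuclideanSpace ℝ (Fin n)) (α : Fin n → Bool) :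
    (chamber V t α).Nonempty ↔
      ∀ y ∈ (Vᗮ : Set (EuclideanSpace ℝ (Fin n))) ∩ orthant α, 0 ≤ ⟪t, y⟫ := by
  constructor
  · rintro ⟨x, ⟨v, hvV, rfl⟩, hxO⟩ y ⟨hyV, hyO⟩
    have h0 : ⟪v, y⟫ = 0 := (Submodule.mem_orthogonal V y).mp hyV v hvV
    have hx : (0 : ℝ) ≤ ⟪t + v, y⟫ := by
      have hform : ⟪t + v, y⟫ = ∑ i, (t + v) i * y i := by
        simp [PiLp.inner_apply, RCLike.inner_apply]
        exact Finset.sum_congr rfl fun i _ => mul_comm _ _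
      rw [hform]
      refine Finset.sum_nonneg fun i _ => ?_
      rcases Bool.eq_false_or_eq_true (α i) with h | h
      · exact mul_nonneg ((hxO i).1 h) ((hyO i).1 h)
      · have := mul_nonneg (neg_nonneg.mpr ((hxO i).2 h)) (neg_nonneg.mpr ((hyO i).2 h))
        rwa [neg_mul_neg] at this
    have ht : ⟪t, y⟫ = ⟪t + v, y⟫ - ⟪v, y⟫ := by
      rw [inner_add_left]; ring
    rw [ht, h0, sub_zero]
    exact hx
  · intro h
    by_contra hne
    rw [Set.not_nonempty_iff_eq_empty] at hne
    have htC : t ∉ galeCone V α := by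
      intro htC
      obtain ⟨a, haO, v, hvV, hav⟩ := cone_sub V α htC
      have hmem : a ∈ chamber V t α := ⟨⟨-v, V.neg_mem hvV, by show t + -v = a; rw [hav, add_neg_cancel_right]⟩, haO⟩
      rw [hne] at hmem
      exact hmem
    obtain ⟨y, hy1, hy2⟩ :=
      ProperCone.hyperplane_separation'
        ({ carrier := (galeCone V α : Set (EuclideanSpace ℝ (Fin n)))
           add_mem' := fun hx hy => (galeCone V α).add_mem hx hy
           zero_mem' := ⟨fun _ => 0, fun _ _ => le_refl _, by simp⟩
           smul_mem' := by
             rintro ⟨r, hr⟩ x ⟨c, hc0, rfl⟩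
             refine ⟨fun i => r * c i, fun i hi => mul_nonneg hr (hc0 i hi), ?_⟩
             change (r • ∑ i ∈ Finset.univ, c i • gens V α i) = _
             rw [Finset.smul_sum]; simp [mul_smul]
           isClosed' := coneOn_univ_isClosed (gens V α) } :
          ProperCone ℝ (EuclideanSpace ℝ (Fin n)))
        htC
    have hyV : y ∈ Vᗮ := by
      rw [Submodule.mem_orthogonal]
      intro u huV
      have h1 : (0:ℝ) ≤ ⟪u, y⟫ := by
        have := hy1 u (by have hm := mem_cone_of V α (zero_mem_orthant α) huV; rw [zero_add] at hm; exact hm)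
        exact this
      have h2 : (0:ℝ) ≤ ⟪-u, y⟫ := by
        have := hy1 (-u) (by have hm := mem_cone_of V α (zero_mem_orthant α) (V.neg_mem huV); rw [zero_add] at hm; exact hm)
        exact this
      rw [inner_neg_left] at h2
      linarith
    have hyO : y ∈ orthant α := by
      intro k
      have hk : (0:ℝ) ≤ (if α k then (1:ℝ) else -1) * y k := by
        have hmem := mem_cone_of V α (single_mem_orthant α k) V.zero_mem
        rw [add_zero] at hmem
        have := hy1 _ hmem
        rw [EuclideanSpace.inner_single_left] at this
        simpa using this
      constructor <;> intro hb
      · simpa [hb] using hk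
      · simp only [hb, Bool.false_eq_true, if_false, neg_mul, neg_one_mul] at hk
        linarith
    have := h y ⟨hyV, hyO⟩
    linarith
end

section
/- Gale duality, boundedness form: Let V be a linear subspace of ℝⁿ, let t ∈ ℝⁿ, and let α : Fin n → Bool be a sign vector with associated closed orthant O_α. Then the chamber (t + V) ∩ O_α is nonempty if and only if the linear functional y ↦ ⟨t, y⟩ is bounded below on the cone V^⊥ ∩ O_α (equivalently, the set {⟨t, y⟩ | y ∈ V^⊥ ∩ O_α} is bounded below in ℝ). In other words, a sign vector is t-unstable for the arrangement on t + V exactly when the functional ⟨−t, ·⟩ is unbounded above on the corresponding cone of the Gale dual arrangement on V^⊥. -/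
open scoped RealInnerProductSpace

/-- Conic Carathéodory: any nonnegative combination is a nonnegative combination
supported on a linearly independent subfamily. -/
lemma conic_caratheodory {ι : Type*} [Fintype ι] {E : Type*} [AddCommGroup E] [Module ℝ E]
    (g : ι → E) :
    ∀ T : Finset ι, ∀ l : ι → ℝ, (∀ i, 0 ≤ l i) → (∀ i ∉ T, l i = 0) →
    ∃ T' : Finset ι, LinearIndependent ℝ (fun i : T' => g i) ∧
      ∃ m : ι → ℝ, (∀ i, 0 ≤ m i) ∧ (∀ i ∉ T', m i = 0) ∧
        ∑ i, m i • g i = ∑ i, l i • g i := by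
  classical
  intro T
  induction T using Finset.strongInduction with
  | _ T ih =>
    intro l hl hsupp
    by_cases hind : LinearIndependent ℝ (fun i : T => g i)
    · exact ⟨T, hind, l, hl, hsupp, rfl⟩
    · obtain ⟨c, hc0, j, hcj⟩ := Fintype.not_linearIndependent_iff.mp hind
      set μ : ι → ℝ := fun i => if h : i ∈ T then c ⟨i, h⟩ else 0 with hμdef
      have hμsupp : ∀ i ∉ T, μ i = 0 := fun i hi => dif_neg hi
      have hμsum : ∑ i, μ i • g i = 0 := by
        rw [← Finset.sum_subset (Finset.subset_univ T)
          (fun i _ hi => by rw [hμsupp i hi, zero_smul])]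
        rw [← Finset.sum_coe_sort T (fun i => μ i • g i)]
        rw [← hc0]
        refine Finset.sum_congr rfl fun i _ => ?_
        simp [hμdef, dif_pos i.2]
      have hμj : μ (j : ι) ≠ 0 := by simpa [hμdef, dif_pos j.2] using hcj
      obtain ⟨m, hmsum, hmsupp, i1, hi1⟩ :
          ∃ m : ι → ℝ, ∑ i, m i • g i = 0 ∧ (∀ i ∉ T, m i = 0) ∧ ∃ i, 0 < m i := by
        rcases lt_or_gt_of_ne hμj with h | h
        · refine ⟨-μ, ?_, fun i hi => by simp [hμsupp i hi], (j : ι), by simpa using h⟩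
          simp only [Pi.neg_apply, neg_smul, Finset.sum_neg_distrib, hμsum, neg_zero]
        · exact ⟨μ, hμsum, hμsupp, (j : ι), h⟩
      have hi1T : i1 ∈ T := by
        by_contra h; rw [hmsupp i1 h] at hi1; exact lt_irrefl 0 hi1
      set P : Finset ι := T.filter (fun i => 0 < m i) with hP
      have hPne : P.Nonempty := ⟨i1, Finset.mem_filter.mpr ⟨hi1T, hi1⟩⟩
      obtain ⟨i0, hi0P, hi0min⟩ := P.exists_min_image (fun i => l i / m i) hPne
      have hi0T : i0 ∈ T := (Finset.mem_filter.mp hi0P).1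
      have hmi0 : 0 < m i0 := (Finset.mem_filter.mp hi0P).2
      set t := l i0 / m i0 with ht
      have ht0 : 0 ≤ t := div_nonneg (hl i0) hmi0.le
      set l' : ι → ℝ := fun i => l i - t * m i with hl'def
      have hl'0 : ∀ i, 0 ≤ l' i := by
        intro i
        rcases le_or_gt (m i) 0 with h | h
        · have h1 : t * m i ≤ 0 := mul_nonpos_of_nonneg_of_nonpos ht0 h
          have h2 := hl i
          simp only [hl'def]; linarith
        · have hiT : i ∈ T := by
            by_contra hT; rw [hmsupp i hT] at h; exact lt_irrefl 0 h
          have h2 : t ≤ l i / m i := hi0min i (Finset.mem_filter.mpr ⟨hiT, h⟩)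
          have h3 : t * m i ≤ l i := (le_div_iff₀ h).mp h2
          simp only [hl'def]; linarith
      have hl'supp : ∀ i ∉ T.erase i0, l' i = 0 := by
        intro i hi
        by_cases hii : i = i0
        · subst hii
          simp only [hl'def, ht]
          rw [div_mul_cancel₀ _ hmi0.ne']
          ring
        · have hiT : i ∉ T := fun hT => hi (Finset.mem_erase.mpr ⟨hii, hT⟩)
          simp only [hl'def, hsupp i hiT, hmsupp i hiT]; ring
      have hsum' : ∑ i, l' i • g i = ∑ i, l i • g i := by
        simp only [hl'def, sub_smul, mul_smul, Finset.sum_sub_distrib, ← Finset.smul_sum,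
          hmsum, smul_zero, sub_zero]
      obtain ⟨T', hT', m', h1, h2, h3⟩ :=
        ih (T.erase i0) (Finset.erase_ssubset hi0T) l' hl'0 hl'supp
      exact ⟨T', hT', m', h1, h2, h3.trans hsum'⟩

/-- A finitely generated cone is closed. -/
lemma isClosed_nonnegSpan {ι : Type*} [Fintype ι]
    {E : Type*} [NormedAddCommGroup E] [NormedSpace ℝ E]
    (g : ι → E) :
    IsClosed {x : E | ∃ l : ι → ℝ, (∀ i, 0 ≤ l i) ∧ x = ∑ i, l i • g i} := by
  classical
  have hset : {x : E | ∃ l : ι → ℝ, (∀ i, 0 ≤ l i) ∧ x = ∑ i, l i • g i} =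
      ⋃ (T : Finset ι) (_ : LinearIndependent ℝ (fun i : T => g i)),
        (fun m : T → ℝ => ∑ i, m i • g i.1) '' {m | ∀ i, 0 ≤ m i} := by
    ext x
    simp only [Set.mem_iUnion, Set.mem_image, Set.mem_setOf_eq]
    constructor
    · rintro ⟨l, hl, rfl⟩
      obtain ⟨T, hT, m, hm0, hmsupp, hmsum⟩ :=
        conic_caratheodory g Finset.univ l hl (by simp)
      refine ⟨T, hT, fun i => m i, fun i => hm0 i, ?_⟩
      calc ∑ i : T, m i.1 • g i.1 = ∑ i ∈ T, m i • g i :=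
            Finset.sum_coe_sort T (fun i => m i • g i)
        _ = ∑ i, m i • g i := Finset.sum_subset (Finset.subset_univ T)
            (fun i _ hi => by rw [hmsupp i hi, zero_smul])
        _ = ∑ i, l i • g i := hmsum
    · rintro ⟨T, hT, m, hm, rfl⟩
      refine ⟨fun i => if h : i ∈ T then m ⟨i, h⟩ else 0, fun i => ?_, ?_⟩
      · by_cases h : i ∈ T
        · simpa [dif_pos h] using hm ⟨i, h⟩
        · simp [dif_neg h]
      · calc ∑ i : T, m i • g i.1
            = ∑ i ∈ T, (if h : i ∈ T then m ⟨i, h⟩ else 0) • g i := by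
              rw [← Finset.sum_coe_sort T
                (fun i => (if h : i ∈ T then m ⟨i, h⟩ else 0) • g i)]
              exact Finset.sum_congr rfl fun i _ => by rw [dif_pos i.2]
          _ = ∑ i, (if h : i ∈ T then m ⟨i, h⟩ else 0) • g i :=
              Finset.sum_subset (Finset.subset_univ T)
                (fun i _ hi => by rw [dif_neg hi, zero_smul])
  rw [hset]
  refine isClosed_iUnion_of_finite fun T => isClosed_iUnion_of_finite fun hT => ?_
  let fT : (T → ℝ) →ₗ[ℝ] E :=
    { toFun := fun m => ∑ i, m i • g i.1
      map_add' := fun a b => by simp [add_smul, Finset.sum_add_distrib]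
      map_smul' := fun c a => by simp [mul_smul, Finset.smul_sum] }
  have hker : LinearMap.ker fT = ⊥ := by
    rw [LinearMap.ker_eq_bot']
    intro m hm
    exact funext (Fintype.linearIndependent_iff.mp hT m hm)
  have hemb := LinearMap.isClosedEmbedding_of_injective (𝕜 := ℝ) hker
  have hcl : IsClosed {m : T → ℝ | ∀ i, 0 ≤ m i} := by
    have : {m : T → ℝ | ∀ i, 0 ≤ m i} = ⋂ i, {m | 0 ≤ m i} := by
      ext m; simp [Set.mem_iInter]
    rw [this]
    exact isClosed_iInter fun i => isClosed_le continuous_const (continuous_apply i)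
  exact hemb.isClosedMap _ hcl

lemma orthant_zero {n : ℕ} (α : Fin n → Bool) : (0 : EuclideanSpace ℝ (Fin n)) ∈ orthant α :=
  fun _ => ⟨fun _ => le_refl 0, fun _ => le_refl 0⟩

lemma orthant_smul {n : ℕ} {α : Fin n → Bool} {c : ℝ} (hc : 0 ≤ c)
    {x : EuclideanSpace ℝ (Fin n)} (hx : x ∈ orthant α) : c • x ∈ orthant α := by
  intro i
  have h : (c • x) i = c * x i := rfl
  exact ⟨fun hα => by rw [h]; exact mul_nonneg hc ((hx i).1 hα),
    fun hα => by rw [h]; exact mul_nonpos_of_nonneg_of_nonpos hc ((hx i).2 hα)⟩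

lemma orthant_inner_nonneg {n : ℕ} {α : Fin n → Bool} {x y : EuclideanSpace ℝ (Fin n)}
    (hx : x ∈ orthant α) (hy : y ∈ orthant α) : 0 ≤ ⟪x, y⟫ := by
  rw [PiLp.inner_apply]
  refine Finset.sum_nonneg fun i _ => ?_
  have h : ⟪x i, y i⟫ = x i * y i := by
    simp [RCLike.inner_apply, mul_comm]
  rw [h]
  cases hα : α i with
  | true => exact mul_nonneg ((hx i).1 hα) ((hy i).1 hα)
  | false => exact mul_nonneg_of_nonpos_of_nonpos ((hx i).2 hα) ((hy i).2 hα)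

/-- Gale duality, boundedness form: the chamber `(t + V) ∩ O_α` is nonempty iff
the linear functional `y ↦ ⟨t, y⟩` is bounded below on the cone `V^⊥ ∩ O_α`. -/
theorem gale_duality_boundedness {n : ℕ} (V : Submodule ℝ (EuclideanSpace ℝ (Fin n)))
    (t : EuclideanSpace ℝ (Fin n)) (α : Fin n → Bool) :
    (chamber V t α).Nonempty ↔
      BddBelow ((fun y => ⟪t, y⟫) ''
        ((Vᗮ : Set (EuclideanSpace ℝ (Fin n))) ∩ orthant α)) := by
  classical
  constructor
  · rintro ⟨x, ⟨v, hv, rfl⟩, hxo⟩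
    refine ⟨0, ?_⟩
    rintro r ⟨y, ⟨hyV, hyO⟩, rfl⟩
    have h1 : ⟪v, y⟫ = 0 := (Submodule.mem_orthogonal V y).mp hyV v hv
    have h2 : 0 ≤ ⟪t + v, y⟫ := orthant_inner_nonneg hxo hyO
    rw [inner_add_left, h1, add_zero] at h2
    exact h2
  · intro hbdd
    by_contra hne
    set sgn : Fin n → ℝ := fun i => if α i then 1 else -1 with hsgn
    have hsgn2 : ∀ i, sgn i * sgn i = 1 := by
      intro i; simp only [hsgn]; split <;> norm_num
    obtain ⟨s, hs⟩ := IsNoetherian.noetherian V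
    set g : (Fin n ⊕ (↥s ⊕ ↥s)) → EuclideanSpace ℝ (Fin n) := fun i =>
      match i with
      | .inl i => sgn i • EuclideanSpace.single i 1
      | .inr (.inl j) => (j : EuclideanSpace ℝ (Fin n))
      | .inr (.inr j) => -(j : EuclideanSpace ℝ (Fin n)) with hg
    set C : Set (EuclideanSpace ℝ (Fin n)) :=
      {x | ∃ l : (Fin n ⊕ (↥s ⊕ ↥s)) → ℝ, (∀ i, 0 ≤ l i) ∧ x = ∑ i, l i • g i} with hC
    have hsum_single : ∀ o : EuclideanSpace ℝ (Fin n),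
        ∑ i, o i • EuclideanSpace.single i (1:ℝ) = o := by
      intro o
      simpa [EuclideanSpace.basisFun_apply, EuclideanSpace.basisFun_repr] using
        (EuclideanSpace.basisFun (Fin n) ℝ).sum_repr o
    -- characterization of C
    have hCchar : ∀ x, x ∈ C ↔ ∃ v ∈ V, ∃ o ∈ orthant α, x = v + o := by
      intro x
      constructor
      · rintro ⟨l, hl, rfl⟩
        set o : EuclideanSpace ℝ (Fin n) :=
          (WithLp.equiv 2 (Fin n → ℝ)).symm (fun k => l (.inl k) * sgn k) with ho
        have hok : ∀ k, o k = l (.inl k) * sgn k := fun k => rfl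
        refine ⟨∑ j : ↥s ⊕ ↥s, l (.inr j) • g (.inr j), ?_, o, ?_, ?_⟩
        · refine Submodule.sum_mem V fun j _ => ?_
          rcases j with j | j
          · exact V.smul_mem _ (hs ▸ Submodule.subset_span j.2)
          · exact V.smul_mem _ (V.neg_mem (hs ▸ Submodule.subset_span j.2))
        · intro k
          constructor <;> intro hk <;> rw [hok k] <;> simp only [hsgn, hk] <;> simp
          · exact hl (.inl k)
          · exact hl (.inl k)
        · rw [Fintype.sum_sum_type]
          rw [add_comm]
          congr 1
          have : ∀ i : Fin n, l (.inl i) • g (.inl i) =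
              o i • EuclideanSpace.single i (1:ℝ) := by
            intro i
            show l (.inl i) • (sgn i • EuclideanSpace.single i (1:ℝ)) = _
            rw [smul_smul, hok i, mul_comm (l (.inl i)) (sgn i)]
          rw [Finset.sum_congr rfl (fun i _ => this i), hsum_single o]
      · rintro ⟨v, hv, o, hoO, rfl⟩
        rw [← hs] at hv
        obtain ⟨f, -, hf⟩ := Submodule.mem_span_finset.mp hv
        refine ⟨fun i => match i with
          | .inl i => sgn i * o i
          | .inr (.inl j) => max (f j) 0
          | .inr (.inr j) => max (-(f j)) 0, ?_, ?_⟩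
        · rintro (i | j | j)
          · rcases hα : α i with _ | _
            · simp only [hsgn, hα]
              have := (hoO i).2 hα
              simp; linarith
            · simp only [hsgn, hα]
              have := (hoO i).1 hα
              simp; linarith
          · exact le_max_right _ _
          · exact le_max_right _ _
        · rw [Fintype.sum_sum_type, Fintype.sum_sum_type]
          have h1 : ∑ i : Fin n, (sgn i * o i) • g (.inl i) = o := by
            have : ∀ i : Fin n, (sgn i * o i) • g (.inl i) =
                o i • EuclideanSpace.single i (1:ℝ) := by
              intro i
              show (sgn i * o i) • (sgn i • EuclideanSpace.single i (1:ℝ)) = _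
              rw [smul_smul, mul_comm (sgn i) (o i), mul_assoc, hsgn2 i, mul_one]
            rw [Finset.sum_congr rfl (fun i _ => this i), hsum_single o]
          have h2 : (∑ j : ↥s, max (f ↑j) 0 • g (.inr (.inl j))) +
              (∑ j : ↥s, max (-(f ↑j)) 0 • g (.inr (.inr j))) = v := by
            rw [← Finset.sum_add_distrib]
            have : ∀ j : ↥s, max (f ↑j) 0 • g (.inr (.inl j)) +
                max (-(f ↑j)) 0 • g (.inr (.inr j)) = f ↑j • (↑j : EuclideanSpace ℝ (Fin n)) := by
              intro j
              show max (f ↑j) 0 • (↑j : EuclideanSpace ℝ (Fin n)) +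
                max (-(f ↑j)) 0 • (-(↑j : EuclideanSpace ℝ (Fin n))) = _
              rw [smul_neg, ← sub_eq_add_neg, ← sub_smul, max_zero_sub_max_neg_zero_eq_self]
            rw [Finset.sum_congr rfl (fun j _ => this j)]
            rw [Finset.sum_coe_sort s (fun j => f j • (j : EuclideanSpace ℝ (Fin n)))]
            exact hf
          rw [h1, h2]
          exact add_comm v o
    -- the convex cone
    set K : ConvexCone ℝ (EuclideanSpace ℝ (Fin n)) :=
      { carrier := C
        smul_mem' := by
          rintro c hc x ⟨l, hl, rfl⟩
          refine ⟨fun i => c * l i, fun i => mul_nonneg hc.le (hl i), ?_⟩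
          rw [Finset.smul_sum]
          exact Finset.sum_congr rfl fun i _ => (smul_smul c (l i) (g i))
        add_mem' := by
          rintro x ⟨l, hl, rfl⟩ y ⟨l', hl', rfl⟩
          refine ⟨fun i => l i + l' i, fun i => add_nonneg (hl i) (hl' i), ?_⟩
          rw [← Finset.sum_add_distrib]
          exact Finset.sum_congr rfl fun i _ => (add_smul (l i) (l' i) (g i)).symm } with hK
    have hKmem : ∀ x, x ∈ K ↔ x ∈ C := fun x => Iff.rfl
    -- t is not in the cone
    have htK : t ∉ K := by
      intro ht
      obtain ⟨v, hv, o, ho, heq⟩ := (hCchar t).mp ((hKmem t).mp ht)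
      refine hne ⟨t + -v, ⟨-v, V.neg_mem hv, rfl⟩, ?_⟩
      have : t + -v = o := by rw [heq]; abel
      rw [this]; exact ho
    have hCne : (K : Set (EuclideanSpace ℝ (Fin n))).Nonempty :=
      ⟨0, (hCchar 0).mpr ⟨0, V.zero_mem, 0, orthant_zero α, (add_zero 0).symm⟩⟩
    have hCcl : IsClosed (K : Set (EuclideanSpace ℝ (Fin n))) := isClosed_nonnegSpan g
    obtain ⟨y, hy1, hy2⟩ :=
      ProperCone.hyperplane_separation' (x₀ := t)
        (⟨{ carrier := C
            add_mem' := fun hx hy => K.add_mem hx hy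
            zero_mem' := (hCchar 0).mpr ⟨0, V.zero_mem, 0, orthant_zero α, (add_zero 0).symm⟩
            smul_mem' := by
              rintro c x ⟨l, hl, rfl⟩
              refine ⟨fun i => (c : ℝ) * l i, fun i => mul_nonneg c.2 (hl i), ?_⟩
              rw [Finset.smul_sum]
              exact Finset.sum_congr rfl fun i _ => smul_smul (c : ℝ) (l i) (g i) }, hCcl⟩ :
          ProperCone ℝ (EuclideanSpace ℝ (Fin n))) (fun h => htK h)
    -- y is in the orthogonal complement
    have hyV : y ∈ Vᗮ := by
      rw [Submodule.mem_orthogonal]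
      intro u hu
      have h1 := hy1 u ((hCchar u).mpr ⟨u, hu, 0, orthant_zero α, (add_zero u).symm⟩)
      have h2 := hy1 (-u) ((hCchar (-u)).mpr
        ⟨-u, V.neg_mem hu, 0, orthant_zero α, (add_zero (-u)).symm⟩)
      rw [inner_neg_left] at h2
      linarith
    -- y is in the orthant
    have hyO : y ∈ orthant α := by
      intro i
      have hmem : sgn i • EuclideanSpace.single i (1:ℝ) ∈ orthant α := by
        intro k
        constructor <;> intro hk <;> by_cases hki : k = i
        · subst hki
          have : (sgn k • EuclideanSpace.single k (1:ℝ)) k = sgn k := by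
            simp [EuclideanSpace.single_apply]
          rw [this]; simp [hsgn, hk]
        · have : (sgn i • EuclideanSpace.single i (1:ℝ)) k = 0 := by
            simp [EuclideanSpace.single_apply, hki]
          rw [this]
        · subst hki
          have : (sgn k • EuclideanSpace.single k (1:ℝ)) k = sgn k := by
            simp [EuclideanSpace.single_apply]
          rw [this]; simp [hsgn, hk]
        · have : (sgn i • EuclideanSpace.single i (1:ℝ)) k = 0 := by
            simp [EuclideanSpace.single_apply, hki]
          rw [this]
      have hi := hy1 (sgn i • EuclideanSpace.single i 1)
        ((hCchar _).mpr ⟨0, V.zero_mem, _, hmem, (zero_add _).symm⟩)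
      rw [real_inner_smul_left, EuclideanSpace.inner_single_left] at hi
      simp only [map_one, one_mul] at hi
      constructor <;> intro hk
      · have h1 : sgn i = 1 := by simp [hsgn, hk]
        rw [h1, one_mul] at hi; exact hi
      · have h1 : sgn i = -1 := by simp [hsgn, hk]
        rw [h1] at hi; linarith
    -- contradiction with boundedness
    obtain ⟨b, hb⟩ := hbdd
    have hr : ⟪t, y⟫ < 0 := hy2
    set c : ℝ := max 0 ((b - 1) / ⟪t, y⟫) with hc
    have hc0 : 0 ≤ c := le_max_left _ _
    have hmem2 : ⟪t, c • y⟫ ∈ (fun y => ⟪t, y⟫) ''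
        ((Vᗮ : Set (EuclideanSpace ℝ (Fin n))) ∩ orthant α) :=
      ⟨c • y, ⟨Submodule.smul_mem _ _ hyV, orthant_smul hc0 hyO⟩, rfl⟩
    have hble := hb hmem2
    rw [real_inner_smul_right] at hble
    have h2 : c * ⟪t, y⟫ ≤ (b - 1) / ⟪t, y⟫ * ⟪t, y⟫ :=
      mul_le_mul_of_nonpos_right (le_max_right _ _) hr.le
    rw [div_mul_cancel₀ _ hr.ne] at h2
    linarith
end

section
/- Boundedness of the polarization on a chamber is detected on the recession cone, and in particular is independent of the translation parameter: Let V be a linear subspace of ℝⁿ, let t, m ∈ ℝⁿ, and let α : Fin n → Bool be a sign vector with associated closed orthant O_α. If the chamber (t + V) ∩ O_α is nonempty, then the function x ↦ ⟨m, x⟩ is bounded above on (t + V) ∩ O_α if and only if ⟨m, y⟩ ≤ 0 for every y ∈ V ∩ O_α. Consequently, for two parameters t, t′ ∈ ℝⁿ such that both chambers (t + V) ∩ O_α and (t′ + V) ∩ O_α are nonempty, ⟨m, ·⟩ is bounded above on the first if and only if it is bounded above on the second. -/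
open scoped RealInnerProductSpace

-- easy direction
lemma bdd_imp {n : ℕ} {V : Submodule ℝ (EuclideanSpace ℝ (Fin n))}
    {t m : EuclideanSpace ℝ (Fin n)} {α : Fin n → Bool}
    (hne : (chamber V t α).Nonempty)
    (hb : BddAbove ((fun x => ⟪m, x⟫) '' chamber V t α)) :
    ∀ y ∈ (V : Set (EuclideanSpace ℝ (Fin n))) ∩ orthant α, ⟪m, y⟫ ≤ 0 := by
  rintro y ⟨hyV, hyO⟩
  by_contra hpos
  push_neg at hpos
  obtain ⟨b, hub⟩ := hb
  obtain ⟨x₀, ⟨v₀, hv₀V, hv₀e⟩, hx₀O⟩ := hne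
  set c := ⟪m, x₀⟫ with hc
  obtain ⟨s, hs0, hs⟩ : ∃ s : ℝ, 0 ≤ s ∧ b < c + s * ⟪m, y⟫ := by
    refine ⟨max 0 ((b - c + 1) / ⟪m, y⟫), le_max_left _ _, ?_⟩
    have h1 : (b - c + 1) / ⟪m, y⟫ ≤ max 0 ((b - c + 1) / ⟪m, y⟫) := le_max_right _ _
    have h2 := mul_le_mul_of_nonneg_right h1 hpos.le
    rw [div_mul_cancel₀ _ hpos.ne'] at h2
    linarith
  have hxmem : x₀ + s • y ∈ chamber V t α := by
    refine ⟨⟨v₀ + s • y, V.add_mem hv₀V (V.smul_mem s hyV), ?_⟩, ?_⟩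
    · show t + (v₀ + s • y) = x₀ + s • y
      rw [← hv₀e]
      exact (add_assoc t v₀ (s • y)).symm
    · intro i
      constructor <;> intro hα
      · have h1 := (hx₀O i).1 hα
        have h2 := (hyO i).1 hα
        have : (x₀ + s • y) i = x₀ i + s * y i := rfl
        rw [this]
        have := mul_nonneg hs0 h2
        linarith
      · have h1 := (hx₀O i).2 hα
        have h2 := (hyO i).2 hα
        have : (x₀ + s • y) i = x₀ i + s * y i := rfl
        rw [this]
        have := mul_nonpos_of_nonneg_of_nonpos hs0 h2
        linarith
  have := hub (Set.mem_image_of_mem _ hxmem)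
  rw [inner_add_right, real_inner_smul_right] at this
  simp only [← hc] at this
  linarith

open Filter Topology in
lemma unbdd_imp {n : ℕ} : ∀ (d : ℕ) (V : Submodule ℝ (EuclideanSpace ℝ (Fin n)))
    (_ : Module.finrank ℝ V ≤ d) (t m : EuclideanSpace ℝ (Fin n)) (α : Fin n → Bool),
    ¬ BddAbove ((fun x => ⟪m, x⟫) '' chamber V t α) →
    ∃ y ∈ (V : Set (EuclideanSpace ℝ (Fin n))) ∩ orthant α, 0 < ⟪m, y⟫ := by
  intro d
  induction d with
  | zero =>
    intro V hV t m α hb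
    exfalso
    apply hb
    have hbot : V = ⊥ := Submodule.finrank_eq_zero.mp (Nat.le_zero.mp hV)
    have hsub : ((fun x => ⟪m, x⟫) '' chamber V t α) ⊆ {⟪m, t⟫} := by
      rintro r ⟨x, ⟨⟨v, hvV, hve⟩, -⟩, rfl⟩
      have : v = 0 := by simpa [hbot] using hvV
      simp [← hve, this]
    exact BddAbove.mono hsub bddAbove_singleton
  | succ d ih =>
    intro V hV t m α hb
    have hne : (chamber V t α).Nonempty := by
      by_contra h
      rw [Set.not_nonempty_iff_eq_empty] at h
      exact hb (by rw [h]; simp)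
    obtain ⟨x₀, hx₀C⟩ := hne
    obtain ⟨⟨v₀, hv₀V, hv₀e⟩, hx₀O⟩ := hx₀C
    have hm : m ≠ 0 := by
      rintro rfl
      apply hb
      refine ⟨0, ?_⟩
      rintro r ⟨x, -, rfl⟩
      simp [inner_zero_left]
    have hm' : (0:ℝ) < ‖m‖ := norm_pos_iff.mpr hm
    have hex : ∀ k : ℕ, ∃ x, x ∈ chamber V t α ∧ ⟪m, x₀⟫ + (k+1) < ⟪m, x⟫ := by
      intro k
      rcases not_bddAbove_iff.mp hb (⟪m, x₀⟫ + (k+1)) with ⟨r, ⟨x, hx, rfl⟩, hr⟩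
      exact ⟨x, hx, hr⟩
    choose x hxC hxlt using hex
    have hxV : ∀ k, x k - x₀ ∈ V := by
      intro k
      obtain ⟨v, hv, hve⟩ := (hxC k).1
      rw [← hve, ← hv₀e]
      show t + v - (t + v₀) ∈ V
      have : t + v - (t + v₀) = v - v₀ := by abel
      rw [this]
      exact V.sub_mem hv hv₀V
    set dd : ℕ → ℝ := fun k => ‖x k - x₀‖ with hdd
    have hdpos : ∀ k : ℕ, ((k:ℝ)+1)/‖m‖ ≤ dd k := by
      intro k
      have h1 : ((k:ℝ)+1) < ⟪m, x k - x₀⟫ := by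
        rw [inner_sub_right]; linarith [hxlt k]
      have h2 : ⟪m, x k - x₀⟫ ≤ ‖m‖ * ‖x k - x₀‖ := real_inner_le_norm m _
      rw [div_le_iff₀ hm']
      calc ((k:ℝ)+1) ≤ ‖m‖ * ‖x k - x₀‖ := by linarith
        _ = dd k * ‖m‖ := by rw [mul_comm]
    have hd0 : ∀ k, 0 < dd k := fun k =>
      lt_of_lt_of_le (by positivity) (hdpos k)
    have hdne : ∀ k, x k - x₀ ≠ 0 := fun k => by
      have := hd0 k
      rw [hdd] at this
      exact norm_pos_iff.mp this
    set u : ℕ → EuclideanSpace ℝ (Fin n) := fun k => (dd k)⁻¹ • (x k - x₀) with hu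
    have hu1 : ∀ k, u k ∈ Metric.sphere (0 : EuclideanSpace ℝ (Fin n)) 1 := by
      intro k
      rw [mem_sphere_zero_iff_norm]
      exact norm_smul_inv_norm (hdne k)
    obtain ⟨y, hy_sph, φ, hφ, hconv⟩ :=
      (isCompact_sphere (0 : EuclideanSpace ℝ (Fin n)) 1).tendsto_subseq hu1
    have hdtop : Tendsto (fun j => dd (φ j)) atTop atTop := by
      refine tendsto_atTop_mono (fun j => ?_)
        (Tendsto.atTop_div_const hm'
          (tendsto_atTop_add_const_right atTop 1 tendsto_natCast_atTop_atTop))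
      refine le_trans ?_ (hdpos (φ j))
      have hj : (j:ℝ) ≤ (φ j : ℝ) := Nat.cast_le.mpr hφ.le_apply
      gcongr
    have hyV : y ∈ V := by
      have hcl : IsClosed (V : Set (EuclideanSpace ℝ (Fin n))) :=
        Submodule.closed_of_finiteDimensional V
      refine hcl.mem_of_tendsto hconv (Filter.Eventually.of_forall fun j => ?_)
      exact V.smul_mem _ (hxV (φ j))
    have hcoord : ∀ i, Tendsto (fun j => u (φ j) i) atTop (𝓝 (y i)) := by
      intro i
      have hc : Continuous fun z : EuclideanSpace ℝ (Fin n) => z i :=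
        (EuclideanSpace.proj (𝕜 := ℝ) i).continuous
      exact (hc.tendsto y).comp hconv
    have huapp : ∀ k i, u k i = (x k i - x₀ i) / dd k := by
      intro k i
      rw [div_eq_inv_mul]
      rfl
    have hyO : y ∈ orthant α := by
      intro i
      constructor <;> intro hα
      · have h1 : ∀ j, -(x₀ i) / dd (φ j) ≤ u (φ j) i := by
          intro j
          rw [huapp, div_le_div_iff_of_pos_right (hd0 (φ j))]
          have := ((hxC (φ j)).2 i).1 hα
          linarith
        have h2 : Tendsto (fun j => -(x₀ i) / dd (φ j)) atTop (𝓝 0) :=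
          Tendsto.div_atTop tendsto_const_nhds hdtop
        exact le_of_tendsto_of_tendsto h2 (hcoord i)
          (Filter.Eventually.of_forall h1)
      · have h1 : ∀ j, u (φ j) i ≤ -(x₀ i) / dd (φ j) := by
          intro j
          rw [huapp, div_le_div_iff_of_pos_right (hd0 (φ j))]
          have := ((hxC (φ j)).2 i).2 hα
          linarith
        have h2 : Tendsto (fun j => -(x₀ i) / dd (φ j)) atTop (𝓝 0) :=
          Tendsto.div_atTop tendsto_const_nhds hdtop
        exact le_of_tendsto_of_tendsto (hcoord i) h2
          (Filter.Eventually.of_forall h1)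
    have hinner : Tendsto (fun j => ⟪m, u (φ j)⟫) atTop (𝓝 ⟪m, y⟫) := by
      have hc : Continuous fun z : EuclideanSpace ℝ (Fin n) => ⟪m, z⟫ :=
        continuous_const.inner continuous_id
      exact (hc.tendsto y).comp hconv
    have hmy : 0 ≤ ⟪m, y⟫ := by
      refine ge_of_tendsto hinner (Filter.Eventually.of_forall fun j => ?_)
      show 0 ≤ ⟪m, (dd (φ j))⁻¹ • (x (φ j) - x₀)⟫
      rw [real_inner_smul_right]
      refine mul_nonneg (inv_nonneg.mpr (hd0 (φ j)).le) ?_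
      rw [inner_sub_right]
      have := hxlt (φ j)
      have : (0:ℝ) ≤ (φ j : ℝ) + 1 := by positivity
      linarith [hxlt (φ j)]
    rcases eq_or_lt_of_le hmy with hmy0 | hmy0
    swap
    · exact ⟨y, ⟨hyV, hyO⟩, hmy0⟩
    -- case ⟪m, y⟫ = 0 : slide points to a coordinate hyperplane
    have hy0 : y ≠ 0 := by
      intro h
      rw [h, mem_sphere_zero_iff_norm, norm_zero] at hy_sph
      norm_num at hy_sph
    set S : Finset (Fin n) := Finset.univ.filter (fun i => y i ≠ 0) with hSdef
    have hS : S.Nonempty := by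
      by_contra h
      rw [Finset.not_nonempty_iff_eq_empty] at h
      apply hy0
      ext i
      by_contra hi
      have : i ∈ S := Finset.mem_filter.mpr ⟨Finset.mem_univ _, hi⟩
      rw [h] at this
      exact absurd this (Finset.notMem_empty i)
    have hratio : ∀ k : ℕ, ∀ i ∈ S, 0 ≤ x k i / y i := by
      intro k i hi
      have hyi : y i ≠ 0 := (Finset.mem_filter.mp hi).2
      cases hα : α i with
      | false =>
        have h1 : x k i ≤ 0 := ((hxC k).2 i).2 hα
        have h2 : y i < 0 := lt_of_le_of_ne ((hyO i).2 hα) hyi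
        have := div_nonneg (neg_nonneg.mpr h1) (neg_nonneg.mpr h2.le)
        rwa [neg_div_neg_eq] at this
      | true =>
        have h1 : 0 ≤ x k i := ((hxC k).2 i).1 hα
        have h2 : 0 < y i := lt_of_le_of_ne ((hyO i).1 hα) (Ne.symm hyi)
        exact div_nonneg h1 h2.le
    set s : ℕ → ℝ := fun k => S.inf' hS (fun i => x k i / y i) with hsdef
    have hs_nonneg : ∀ k, 0 ≤ s k := fun k => Finset.le_inf' hS _ (hratio k)
    have hs_le : ∀ k, ∀ i ∈ S, s k ≤ x k i / y i := fun k i hi => Finset.inf'_le _ hi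
    have hattain : ∀ k : ℕ, ∃ i, i ∈ S ∧ s k = x k i / y i := fun k =>
      Finset.exists_mem_eq_inf' hS (fun i => x k i / y i)
    choose ik hikS hik using hattain
    set x' : ℕ → EuclideanSpace ℝ (Fin n) := fun k => x k - s k • y with hx'def
    have hx'app : ∀ k i, x' k i = x k i - s k * y i := fun k i => rfl
    have hx'O : ∀ k, x' k ∈ orthant α := by
      intro k i
      by_cases hyi : y i = 0
      · have he : x' k i = x k i := by rw [hx'app, hyi, mul_zero, sub_zero]
        rw [he]
        exact (hxC k).2 i
      · have hi : i ∈ S := Finset.mem_filter.mpr ⟨Finset.mem_univ _, hyi⟩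
        have hle := hs_le k i hi
        constructor <;> intro hα
        · have hy' : 0 < y i := lt_of_le_of_ne ((hyO i).1 hα) (Ne.symm hyi)
          have h2 : s k * y i ≤ x k i := by
            have := mul_le_mul_of_nonneg_right hle hy'.le
            rwa [div_mul_cancel₀ _ hyi] at this
          rw [hx'app]
          linarith
        · have hy' : y i < 0 := lt_of_le_of_ne ((hyO i).2 hα) hyi
          have h2 : x k i ≤ s k * y i := by
            have := mul_le_mul_of_nonpos_right hle hy'.le
            rwa [div_mul_cancel₀ _ hyi] at this
          rw [hx'app]
          linarith
    have hx'V : ∀ k, x' k ∈ (fun v => t + v) '' (V : Set (EuclideanSpace ℝ (Fin n))) := by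
      intro k
      obtain ⟨v, hv, hve⟩ := (hxC k).1
      refine ⟨v - s k • y, V.sub_mem hv (V.smul_mem _ hyV), ?_⟩
      show t + (v - s k • y) = x' k
      rw [hx'def]
      show t + (v - s k • y) = x k - s k • y
      rw [← hve]
      show t + (v - s k • y) = t + v - s k • y
      abel
    have hzero : ∀ k, x' k (ik k) = 0 := by
      intro k
      have hyik : y (ik k) ≠ 0 := (Finset.mem_filter.mp (hikS k)).2
      rw [hx'app, hik k, div_mul_cancel₀ _ hyik, sub_self]
    have hfx' : ∀ k, ⟪m, x' k⟫ = ⟪m, x k⟫ := by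
      intro k
      show ⟪m, x k - s k • y⟫ = ⟪m, x k⟫
      rw [inner_sub_right, real_inner_smul_right, ← hmy0, mul_zero, sub_zero]
    -- pigeonhole on the vanishing coordinate
    obtain ⟨i₀, hi₀⟩ := Finite.exists_infinite_fiber ik
    have hinf : (ik ⁻¹' {i₀}).Infinite := Set.infinite_coe_iff.mp hi₀
    obtain ⟨k₀, hk₀⟩ := hinf.nonempty
    have hk₀' : ik k₀ = i₀ := hk₀
    set V' : Submodule ℝ (EuclideanSpace ℝ (Fin n)) :=
      V ⊓ LinearMap.ker (EuclideanSpace.projₗ (𝕜 := ℝ) i₀) with hV'def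
    set p : EuclideanSpace ℝ (Fin n) := x' k₀ with hpdef
    have hch : ∀ k, ik k = i₀ → x' k ∈ chamber V' p α := by
      intro k hk
      refine ⟨⟨x' k - p, ?_, ?_⟩, hx'O k⟩
      · refine Submodule.mem_inf.mpr ⟨?_, ?_⟩
        · obtain ⟨w, hw, hwe⟩ := hx'V k
          obtain ⟨w', hw', hwe'⟩ := hx'V k₀
          rw [← hwe, hpdef, ← hwe']
          show t + w - (t + w') ∈ V
          have : t + w - (t + w') = w - w' := by abel
          rw [this]
          exact V.sub_mem hw hw'
        · rw [LinearMap.mem_ker]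
          show (x' k - p) i₀ = 0
          have h1 : (x' k - p) i₀ = x' k i₀ - p i₀ := rfl
          have h2 : x' k i₀ = 0 := by rw [← hk]; exact hzero k
          have h3 : p i₀ = 0 := by rw [hpdef, ← hk₀']; exact hzero k₀
          rw [h1, h2, h3, sub_self]
      · show p + (x' k - p) = x' k
        abel
    have hb' : ¬ BddAbove ((fun x => ⟪m, x⟫) '' chamber V' p α) := by
      rintro ⟨b, hbub⟩
      obtain ⟨N, hN⟩ := exists_nat_gt (b - ⟪m, x₀⟫ - 1)
      obtain ⟨k, hk, hNk⟩ : ∃ k, ik k = i₀ ∧ N ≤ k := by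
        by_contra h
        push_neg at h
        refine hinf ((Set.finite_Iio N).subset ?_)
        intro k hk
        exact h k hk
      have hmem := hbub (Set.mem_image_of_mem (fun x => ⟪m, x⟫) (hch k hk))
      have hmem' : ⟪m, x k⟫ ≤ b := by rw [← hfx' k]; exact hmem
      have h1 := hxlt k
      have h2 : (N:ℝ) ≤ k := Nat.cast_le.mpr hNk
      linarith
    have hi₀S : i₀ ∈ S := hk₀' ▸ hikS k₀
    have hyi₀ : y i₀ ≠ 0 := (Finset.mem_filter.mp hi₀S).2
    have hyV' : y ∉ V' := by
      intro h
      exact hyi₀ ((Submodule.mem_inf.mp h).2)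
    have hlt : V' < V := lt_of_le_of_ne inf_le_left (by
      intro h
      exact hyV' (h ▸ hyV))
    have hrank : Module.finrank ℝ V' ≤ d := by
      have := Submodule.finrank_lt_finrank_of_lt hlt
      omega
    obtain ⟨z, ⟨hzV', hzO⟩, hz⟩ := ih V' hrank p m α hb'
    exact ⟨z, ⟨(inf_le_left : V' ≤ V) hzV', hzO⟩, hz⟩

/-- Boundedness of the polarization on a chamber is detected on the recession cone
`V ∩ O_α`, and in particular is independent of the translation parameter. -/
theorem bounded_iff_recession_cone {n : ℕ}
    (V : Submodule ℝ (EuclideanSpace ℝ (Fin n)))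
    (m : EuclideanSpace ℝ (Fin n)) (α : Fin n → Bool) :
    (∀ t : EuclideanSpace ℝ (Fin n), (chamber V t α).Nonempty →
      (BddAbove ((fun x => ⟪m, x⟫) '' chamber V t α) ↔
        ∀ y ∈ (V : Set (EuclideanSpace ℝ (Fin n))) ∩ orthant α, ⟪m, y⟫ ≤ 0)) ∧
    (∀ t t' : EuclideanSpace ℝ (Fin n),
      (chamber V t α).Nonempty → (chamber V t' α).Nonempty →
      (BddAbove ((fun x => ⟪m, x⟫) '' chamber V t α) ↔
        BddAbove ((fun x => ⟪m, x⟫) '' chamber V t' α))) := by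
  have main : ∀ t : EuclideanSpace ℝ (Fin n), (chamber V t α).Nonempty →
      (BddAbove ((fun x => ⟪m, x⟫) '' chamber V t α) ↔
        ∀ y ∈ (V : Set (EuclideanSpace ℝ (Fin n))) ∩ orthant α, ⟪m, y⟫ ≤ 0) := by
    intro t hne
    constructor
    · exact fun hb => bdd_imp hne hb
    · intro h
      by_contra hb
      obtain ⟨y, hy, hy'⟩ := unbdd_imp (Module.finrank ℝ V) V le_rfl t m α hb
      exact absurd (h y hy) (not_le.mpr hy')
  exact ⟨main, fun t t' h1 h2 => (main t h1).trans (main t' h2).symm⟩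
end

section
/- Two-parameter Gale duality relating a polarized arrangement to its Gale dual: Let V be a linear subspace of ℝⁿ and let t, m ∈ ℝⁿ. Let α : Fin n → Bool be a sign vector with associated closed orthant O_α, and suppose the Gale dual chamber (m + V^⊥) ∩ O_α is nonempty. Then the primal chamber (t + V) ∩ O_α is nonempty if and only if the functional y ↦ ⟨t, y⟩ is bounded below on (m + V^⊥) ∩ O_α. Equivalently: the sign vector α is t-unstable for the arrangement on t + V if and only if the functional ⟨−t, ·⟩ is unbounded above on the chamber of the Gale dual arrangement on m + V^⊥ associated to α. -/
open scoped RealInnerProductSpace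

/-- The conical hull of a finite family of vectors is closed. -/
lemma isClosed_coneSet {E : Type*} [NormedAddCommGroup E] [NormedSpace ℝ E] [T2Space E]
    {ι : Type*} [Fintype ι] (v : ι → E) (T : Finset ι) :
    IsClosed {x : E | ∃ c : ι → ℝ, (∀ i, 0 ≤ c i) ∧ x = ∑ i ∈ T, c i • v i} := by
  classical
  induction T using Finset.strongInduction with
  | _ T ih =>
  by_cases hli : LinearIndependent ℝ (fun i : T => v i)
  · -- the cone is the image of the closed orthant under a closed embedding
    set φ : ({i // i ∈ T} → ℝ) →ₗ[ℝ] E := Fintype.linearCombination ℝ (fun i : T => v i)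
    have hker : LinearMap.ker φ = ⊥ := by
      rw [LinearMap.ker_eq_bot']
      intro c hc
      funext i
      exact Fintype.linearIndependent_iff.mp hli c hc i
    have hemb : Topology.IsClosedEmbedding φ := LinearMap.isClosedEmbedding_of_injective hker
    have horth : IsClosed {c : {i // i ∈ T} → ℝ | ∀ i, 0 ≤ c i} := by
      have : {c : {i // i ∈ T} → ℝ | ∀ i, 0 ≤ c i} = ⋂ i, {c | 0 ≤ c i} := by
        ext c; simp [Set.mem_iInter]
      rw [this]
      exact isClosed_iInter fun i => isClosed_le continuous_const (continuous_apply i)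
    have himg : {x : E | ∃ c : ι → ℝ, (∀ i, 0 ≤ c i) ∧ x = ∑ i ∈ T, c i • v i}
        = φ '' {c : {i // i ∈ T} → ℝ | ∀ i, 0 ≤ c i} := by
      ext x
      constructor
      · rintro ⟨c, hc, rfl⟩
        refine ⟨fun i => c i, fun i => hc i, ?_⟩
        show (∑ i : {i // i ∈ T}, c i • v i) = _
        rw [Finset.sum_coe_sort T (fun i => c i • v i)]
      · rintro ⟨c, hc, rfl⟩
        refine ⟨fun i => if h : i ∈ T then c ⟨i, h⟩ else 0, ?_, ?_⟩
        · intro i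
          by_cases h : i ∈ T
          · simpa [h] using hc ⟨i, h⟩
          · simp [h]
        · show _ = ∑ i ∈ T, (if h : i ∈ T then c ⟨i, h⟩ else 0) • v i
          rw [← Finset.sum_coe_sort T (fun i => (if h : i ∈ T then c ⟨i, h⟩ else 0) • v i)]
          show (∑ i : {i // i ∈ T}, c i • v i) = _
          refine Finset.sum_congr rfl fun i _ => ?_
          simp [i.2]
    rw [himg]
    exact hemb.isClosedMap _ horth
  · -- get a nontrivial relation with a positive coefficient, supported on `T`
    obtain ⟨g, hg0, j₀, hj₀⟩ := Fintype.not_linearIndependent_iff.mp hli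
    set d : ι → ℝ := fun i => if h : i ∈ T then g ⟨i, h⟩ else 0 with hd_def
    have hdsum : ∑ i ∈ T, d i • v i = 0 := by
      rw [← Finset.sum_coe_sort T (fun i => d i • v i)]
      rw [← hg0]
      refine Finset.sum_congr rfl fun i _ => ?_
      simp [hd_def, i.2]
    have hdsupp : ∀ i ∉ T, d i = 0 := by intro i hi; simp [hd_def, hi]
    obtain ⟨e, hesum, hesupp, j₁, hj₁T, hj₁⟩ :
        ∃ e : ι → ℝ, (∑ i ∈ T, e i • v i = 0) ∧ (∀ i ∉ T, e i = 0) ∧ ∃ j ∈ T, 0 < e j := by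
      rcases lt_or_gt_of_ne hj₀ with h | h
      · refine ⟨-d, ?_, fun i hi => by simp [hdsupp i hi], j₀, j₀.2, ?_⟩
        · have : ∀ i, (-d) i • v i = -(d i • v i) := fun i => by simp
          rw [Finset.sum_congr rfl fun i _ => this i, Finset.sum_neg_distrib, hdsum, neg_zero]
        · have : d (j₀ : ι) = g j₀ := by simp [hd_def, j₀.2]
          simpa [this] using h
      · refine ⟨d, hdsum, hdsupp, j₀, j₀.2, ?_⟩
        have : d (j₀ : ι) = g j₀ := by simp [hd_def, j₀.2]
        rw [this]; exact h
    -- the cone is the union of the cones on `T.erase j` for `j` with positive coefficient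
    set P : Finset ι := T.filter (fun i => 0 < e i) with hP_def
    have hPne : P.Nonempty := ⟨j₁, by simp [hP_def, hj₁T, hj₁]⟩
    have hunion : {x : E | ∃ c : ι → ℝ, (∀ i, 0 ≤ c i) ∧ x = ∑ i ∈ T, c i • v i}
        = ⋃ j ∈ (P : Set ι),
            {x : E | ∃ c : ι → ℝ, (∀ i, 0 ≤ c i) ∧ x = ∑ i ∈ T.erase j, c i • v i} := by
      ext x
      simp only [Set.mem_iUnion, Set.mem_setOf_eq, Finset.mem_coe]
      constructor
      · rintro ⟨c, hc, hx⟩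
        obtain ⟨j, hjP, hjmin⟩ := P.exists_min_image (fun i => c i / e i) hPne
        have hjT : j ∈ T := (Finset.mem_filter.mp hjP).1
        have hje : 0 < e j := (Finset.mem_filter.mp hjP).2
        set s : ℝ := c j / e j with hs_def
        have hs0 : 0 ≤ s := div_nonneg (hc j) hje.le
        set c' : ι → ℝ := fun i => c i - s * e i with hc'_def
        have hc'0 : ∀ i, 0 ≤ c' i := by
          intro i
          by_cases hiT : i ∈ T
          · by_cases hie : 0 < e i
            · have hiP : i ∈ P := Finset.mem_filter.mpr ⟨hiT, hie⟩
              have := hjmin i hiP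
              have h2 : s * e i ≤ c i := by
                rw [← le_div_iff₀ hie]; exact this
              simpa [hc'_def] using sub_nonneg.mpr h2
            · have hse : s * e i ≤ 0 :=
                mul_nonpos_of_nonneg_of_nonpos hs0 (not_lt.mp hie)
              have : 0 ≤ c i - s * e i := sub_nonneg.mpr (hse.trans (hc i))
              simpa [hc'_def] using this
          · simp [hc'_def, hesupp i hiT, hc i]
        have hc'j : c' j = 0 := by
          simp [hc'_def, hs_def, div_mul_cancel₀ (c j) hje.ne']
        refine ⟨j, hjP, c', hc'0, ?_⟩
        have hsumT : ∑ i ∈ T, c' i • v i = x := by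
          have h1 : ∀ i, c' i • v i = c i • v i - s • (e i • v i) := by
            intro i; simp [hc'_def, sub_smul, smul_smul]
          rw [Finset.sum_congr rfl fun i _ => h1 i, Finset.sum_sub_distrib,
            ← Finset.smul_sum, hesum, smul_zero, sub_zero, hx]
        calc x = ∑ i ∈ T, c' i • v i := hsumT.symm
          _ = ∑ i ∈ T.erase j, c' i • v i + c' j • v j :=
              (Finset.sum_erase_add T _ hjT).symm
          _ = ∑ i ∈ T.erase j, c' i • v i := by rw [hc'j, zero_smul, add_zero]
      · rintro ⟨j, hjP, c, hc, hx⟩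
        have hjT : j ∈ T := (Finset.mem_filter.mp hjP).1
        refine ⟨fun i => if i = j then 0 else c i, ?_, ?_⟩
        · intro i; by_cases h : i = j <;> simp [h, hc i]
        · calc x = ∑ i ∈ T.erase j, c i • v i := hx
            _ = ∑ i ∈ T.erase j, (if i = j then 0 else c i) • v i :=
              Finset.sum_congr rfl fun i hi => by
                rw [if_neg (Finset.ne_of_mem_erase hi)]
            _ = ∑ i ∈ T.erase j, (if i = j then 0 else c i) • v i
                + (if j = j then (0:ℝ) else c j) • v j := by
                rw [if_pos rfl, zero_smul, add_zero]
            _ = ∑ i ∈ T, (if i = j then 0 else c i) • v i :=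
              Finset.sum_erase_add T _ hjT
    rw [hunion]
    exact Set.Finite.isClosed_biUnion P.finite_toSet
      (fun j hj => ih (T.erase j) (Finset.erase_ssubset ((Finset.mem_filter.mp hj).1)))

/-- Coordinates of a finite sum in Euclidean space. -/
lemma euclid_sum_apply {n : ℕ} {ι : Type*} (s : Finset ι)
    (f : ι → EuclideanSpace ℝ (Fin n)) (k : Fin n) :
    (∑ i ∈ s, f i) k = ∑ i ∈ s, f i k :=
  map_sum (EuclideanSpace.proj k : EuclideanSpace ℝ (Fin n) →L[ℝ] ℝ) f s

/-- Farkas-type lemma: if the chamber `(t+V) ∩ O_α` is empty, there is a vector `w` in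
`V^⊥ ∩ O_α` with `⟪t, w⟫ < 0`. -/
lemma exists_neg_inner_of_chamber_empty {n : ℕ}
    (V : Submodule ℝ (EuclideanSpace ℝ (Fin n))) (t : EuclideanSpace ℝ (Fin n))
    (α : Fin n → Bool) (h : ¬(chamber V t α).Nonempty) :
    ∃ w ∈ Vᗮ, w ∈ orthant α ∧ ⟪t, w⟫ < 0 := by
  classical
  set ε : Fin n → ℝ := fun i => if α i then 1 else -1 with hε_def
  set Q : EuclideanSpace ℝ (Fin n) →L[ℝ] EuclideanSpace ℝ (Fin n) :=
    Vᗮ.subtypeL.comp (Submodule.orthogonalProjectionOnto Vᗮ) with hQ_def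
  have hQ_eq : ∀ x, Q x = (Submodule.orthogonalProjectionOnto Vᗮ x : EuclideanSpace ℝ (Fin n)) :=
    fun x => rfl
  set u : Fin n → EuclideanSpace ℝ (Fin n) :=
    fun i => Q (ε i • EuclideanSpace.single i 1) with hu_def
  set S : Set (EuclideanSpace ℝ (Fin n)) := {x | ∃ c : Fin n → ℝ, (∀ i, 0 ≤ c i) ∧
      x = ∑ i ∈ Finset.univ, c i • u i} with hS_def
  -- S is a closed convex cone
  have hSclosed : IsClosed S := isClosed_coneSet u Finset.univ
  have hSne : S.Nonempty := ⟨0, fun _ => 0, by simp⟩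
  set C : ConvexCone ℝ (EuclideanSpace ℝ (Fin n)) :=
    { carrier := S
      smul_mem' := by
        rintro r hr x ⟨c, hc, rfl⟩
        refine ⟨fun i => r * c i, fun i => mul_nonneg hr.le (hc i), ?_⟩
        simp only [Finset.smul_sum, smul_smul]
      add_mem' := by
        rintro x ⟨c, hc, rfl⟩ y ⟨c', hc', rfl⟩
        refine ⟨fun i => c i + c' i, fun i => add_nonneg (hc i) (hc' i), ?_⟩
        rw [← Finset.sum_add_distrib]
        exact Finset.sum_congr rfl fun i _ => (add_smul (c i) (c' i) (u i)).symm } with hC_def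
  -- `Q t ∉ S` since the chamber is empty
  have htS : Q t ∉ S := by
    rintro ⟨c, hc, hQt⟩
    apply h
    set o : EuclideanSpace ℝ (Fin n) :=
      ∑ i, (c i) • (ε i • EuclideanSpace.single i (1:ℝ)) with ho_def
    have hok : ∀ k, o k = c k * ε k := by
      intro k
      rw [ho_def, euclid_sum_apply]
      rw [Finset.sum_eq_single k]
      · have : ∀ x : EuclideanSpace ℝ (Fin n), ∀ r : ℝ, (r • x) k = r * x k := fun _ _ => rfl
        rw [this, this]
        simp [EuclideanSpace.single_apply, mul_comm]
      · intro b _ hb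
        have : ∀ x : EuclideanSpace ℝ (Fin n), ∀ r : ℝ, (r • x) k = r * x k := fun _ _ => rfl
        rw [this, this]
        simp [EuclideanSpace.single_apply, hb, Ne.symm hb]
      · simp
    have hoO : o ∈ orthant α := by
      intro k
      constructor
      · intro hk
        rw [hok k]
        have : ε k = 1 := by simp [hε_def, hk]
        rw [this, mul_one]; exact hc k
      · intro hk
        rw [hok k]
        have : ε k = -1 := by simp [hε_def, hk]
        rw [this]
        simpa using hc k
    have hQo : Q o = Q t := by
      rw [ho_def, map_sum]
      rw [show (∑ i, Q (c i • (ε i • EuclideanSpace.single i (1:ℝ))))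
            = ∑ i, c i • u i from
        Finset.sum_congr rfl fun i _ => Q.map_smul (c i) _]
      exact hQt.symm
    have hto : t - o ∈ V := by
      have h0 : Submodule.orthogonalProjectionOnto Vᗮ (t - o) = 0 := by
        have : Q (t - o) = 0 := by rw [map_sub, hQo, sub_self]
        exact Subtype.ext this
      have := Submodule.orthogonalProjectionOnto_eq_zero_iff.mp h0
      rwa [Submodule.orthogonal_orthogonal] at this
    refine ⟨o, ⟨o - t, by simpa using V.neg_mem hto, ?_⟩, hoO⟩
    show t + (o - t) = o
    abel
  -- separate
  obtain ⟨y, hy1, hy2⟩ :=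
    ProperCone.hyperplane_separation' (E := EuclideanSpace ℝ (Fin n))
      ({ carrier := S
         zero_mem' := ⟨fun _ => 0, fun _ => le_rfl, by simp⟩
         smul_mem' := by
           rintro r x ⟨c, hc, rfl⟩
           refine ⟨fun i => (r : ℝ) * c i, fun i => mul_nonneg r.2 (hc i), ?_⟩
           simp only [Finset.smul_sum]
           refine Finset.sum_congr rfl fun i _ => ?_
           rw [← smul_assoc]; rfl
         add_mem' := by
           rintro x y ⟨c, hc, rfl⟩ ⟨c', hc', rfl⟩
           refine ⟨fun i => c i + c' i, fun i => add_nonneg (hc i) (hc' i), ?_⟩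
           rw [← Finset.sum_add_distrib]
           exact Finset.sum_congr rfl fun i _ => (add_smul (c i) (c' i) (u i)).symm
         isClosed' := hSclosed } : ProperCone ℝ (EuclideanSpace ℝ (Fin n))) htS
  refine ⟨Q y, ?_, ?_, ?_⟩
  · exact (Submodule.orthogonalProjectionOnto Vᗮ y).2
  · intro i
    have hui : u i ∈ S := by
      refine ⟨fun j => if j = i then 1 else 0, fun j => by positivity, ?_⟩
      have hterm : ∀ j, (if j = i then (1:ℝ) else 0) • u j
          = if j = i then u j else 0 := by
        intro j; split <;> simp
      have hsum : ∑ j ∈ Finset.univ, (if j = i then (1:ℝ) else 0) • u j = u i := by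
        rw [Finset.sum_congr rfl (fun j _ => hterm j)]
        simp [Finset.sum_ite_eq']
      exact hsum.symm
    have h1 : 0 ≤ ⟪u i, y⟫ := hy1 _ hui
    have h2 : ⟪u i, y⟫ = ε i * (Q y) i := by
      have hrw : u i = (Submodule.orthogonalProjectionOnto Vᗮ (ε i • EuclideanSpace.single i 1) :
          EuclideanSpace ℝ (Fin n)) := rfl
      rw [hrw, ← Submodule.starProjection_apply, Submodule.inner_starProjection_left_eq_right,
        Submodule.starProjection_apply, real_inner_smul_left]
      congr 1
      rw [← hQ_eq]
      simp [EuclideanSpace.inner_single_left]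
    rw [h2] at h1
    constructor
    · intro hk
      have : ε i = 1 := by simp [hε_def, hk]
      rwa [this, one_mul] at h1
    · intro hk
      have : ε i = -1 := by simp [hε_def, hk]
      rw [this] at h1
      linarith
  · have hsw : ⟪y, Q t⟫ = ⟪t, Q y⟫ := by
      rw [hQ_eq t, ← Submodule.starProjection_apply, ← Submodule.inner_starProjection_left_eq_right,
        Submodule.starProjection_apply, ← hQ_eq, real_inner_comm]
    rwa [real_inner_comm, hsw] at hy2

/-- Two-parameter Gale duality: if the Gale dual chamber `(m + V^⊥) ∩ O_α` is nonempty,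
then the primal chamber `(t + V) ∩ O_α` is nonempty iff `y ↦ ⟨t, y⟩` is bounded below
on the Gale dual chamber. -/
theorem two_parameter_gale_duality {n : ℕ}
    (V : Submodule ℝ (EuclideanSpace ℝ (Fin n)))
    (t m : EuclideanSpace ℝ (Fin n)) (α : Fin n → Bool)
    (hdual : (chamber Vᗮ m α).Nonempty) :
    (chamber V t α).Nonempty ↔
      BddBelow ((fun y => ⟪t, y⟫) '' chamber Vᗮ m α) := by
  constructor
  · rintro ⟨x, ⟨v, hv, rfl⟩, hxO⟩
    refine ⟨-⟪v, m⟫, ?_⟩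
    rintro r ⟨y, ⟨⟨w, hw, rfl⟩, hyO⟩, rfl⟩
    have hxy : 0 ≤ ⟪t + v, m + w⟫ := orthant_inner_nonneg hxO hyO
    have hvw : ⟪v, w⟫ = 0 := (Submodule.mem_orthogonal V w).mp hw v hv
    simp only [inner_add_left, inner_add_right] at hxy ⊢
    linarith
  · intro hBdd
    by_contra hne
    obtain ⟨w, hw1, hw2, hw3⟩ := exists_neg_inner_of_chamber_empty V t α hne
    obtain ⟨y₀, ⟨w₀, hw₀, rfl⟩, hy₀O⟩ := hdual
    obtain ⟨B, hB⟩ := hBdd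
    set a : ℝ := ⟪t, m + w₀⟫ with ha_def
    set c : ℝ := ⟪t, w⟫ with hc_def
    set s : ℝ := max 0 ((B - a - 1) / c) with hs_def
    have hs0 : 0 ≤ s := le_max_left _ _
    have hsc : s * c ≤ B - a - 1 := by
      have h1 : (B - a - 1) / c ≤ s := le_max_right _ _
      have := mul_le_mul_of_nonpos_right h1 hw3.le
      rwa [div_mul_cancel₀ _ hw3.ne] at this
    have hmem : (m + w₀) + s • w ∈ chamber Vᗮ m α := by
      refine ⟨⟨w₀ + s • w, Vᗮ.add_mem hw₀ (Vᗮ.smul_mem s hw1), ?_⟩, ?_⟩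
      · show m + (w₀ + s • w) = (m + w₀) + s • w
        abel
      intro i
      have h1 := hy₀O i
      have happ : ((m + w₀) + s • w : EuclideanSpace ℝ (Fin n)) i
          = (m + w₀) i + s * w i := rfl
      have h2 := hw2 i
      constructor
      · intro hk
        rw [happ]
        exact add_nonneg (h1.1 hk) (mul_nonneg hs0 (h2.1 hk))
      · intro hk
        rw [happ]
        exact add_nonpos (h1.2 hk) (mul_nonpos_of_nonneg_of_nonpos hs0 (h2.2 hk))
    have hval : ⟪t, (m + w₀) + s • w⟫ = a + s * c := by
      rw [inner_add_right, real_inner_smul_right, ha_def, hc_def]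
    have hB' : B ≤ ⟪t, (m + w₀) + s • w⟫ := hB ⟨(m + w₀) + s • w, hmem, rfl⟩
    rw [hval] at hB'
    linarith
end

section
/- Existence criterion for limits of points of ℂᴺ under a diagonal ℂ×-action with integer weights: Let w : Fin N → ℤ and x : Fin N → ℂ. There exists L : Fin N → ℂ such that the function sending a nonzero complex number λ to the point (λ^{w i} · x i)_{i} of ℂᴺ tends to L as ‖λ‖ → ∞ (that is, along the filter on nonzero complex numbers obtained by pulling back the atTop filter under the norm) if and only if x i = 0 for every index i with w i > 0. Moreover, when this holds, the limit L is given by L i = x i if w i = 0 and L i = 0 if w i ≠ 0. -/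
open Filter

/-- The filter on nonzero complex numbers (units of `ℂ`) of going to infinity,
obtained by pulling back the `atTop` filter under the norm. -/
noncomputable def unitsAtInfty : Filter ℂˣ :=
  Filter.comap (fun z : ℂˣ => ‖(z : ℂ)‖) Filter.atTop

instance : (unitsAtInfty).NeBot := by
  apply Filter.comap_neBot
  intro s hs
  obtain ⟨b, hb⟩ := mem_atTop_sets.mp hs
  refine ⟨Units.mk0 ((max b 1 : ℝ) : ℂ) (by
    simp only [ne_eq, Complex.ofReal_eq_zero]
    positivity), ?_⟩
  apply hb
  simp only [Units.val_mk0, Complex.norm_real, Real.norm_eq_abs]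
  rw [abs_of_pos (by positivity)]
  exact le_max_left _ _

lemma norm_tendsto : Tendsto (fun z : ℂˣ => ‖(z : ℂ)‖) unitsAtInfty atTop :=
  tendsto_comap

lemma zpow_neg_tendsto {n : ℤ} (hn : n < 0) :
    Tendsto (fun z : ℂˣ => (z : ℂ) ^ n) unitsAtInfty (nhds 0) := by
  rw [tendsto_zero_iff_norm_tendsto_zero]
  have : (fun z : ℂˣ => ‖(z : ℂ) ^ n‖) = (fun r : ℝ => r ^ n) ∘ (fun z : ℂˣ => ‖(z : ℂ)‖) := by
    ext z; simp [norm_zpow]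
  rw [this]
  exact (tendsto_zpow_atTop_zero hn).comp norm_tendsto

/-- Existence criterion for limits of points of `ℂᴺ` under a diagonal `ℂˣ`-action with
integer weights: the limit of `(λ^{w i} * x i)_i` as `‖λ‖ → ∞` exists iff `x i = 0`
for every `i` with `w i > 0`; and the limit is `x i` at indices with `w i = 0` and `0`
at indices with `w i ≠ 0`. -/
theorem limit_exists_iff_weights {N : ℕ} (w : Fin N → ℤ) (x : Fin N → ℂ) :
    ((∃ L : Fin N → ℂ,
        Tendsto (fun z : ℂˣ => fun i => (z : ℂ) ^ (w i) * x i) unitsAtInfty (nhds L)) ↔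
      ∀ i, 0 < w i → x i = 0) ∧
    (∀ L : Fin N → ℂ,
      Tendsto (fun z : ℂˣ => fun i => (z : ℂ) ^ (w i) * x i) unitsAtInfty (nhds L) →
      ∀ i, L i = if w i = 0 then x i else 0) := by
  -- forward: any limit forces x i = 0 when w i > 0
  have fwd : ∀ L : Fin N → ℂ,
      Tendsto (fun z : ℂˣ => fun i => (z : ℂ) ^ (w i) * x i) unitsAtInfty (nhds L) →
      ∀ i, 0 < w i → x i = 0 := by
    intro L hL i hw
    by_contra hx
    have hi : Tendsto (fun z : ℂˣ => (z : ℂ) ^ (w i) * x i) unitsAtInfty (nhds (L i)) :=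
      (continuous_apply i).continuousAt.tendsto.comp hL
    have hnorm : Tendsto (fun z : ℂˣ => ‖(z : ℂ) ^ (w i) * x i‖) unitsAtInfty (nhds ‖L i‖) :=
      hi.norm
    have hnorm' : Tendsto (fun z : ℂˣ => ‖(z : ℂ) ^ (w i) * x i‖) unitsAtInfty atTop := by
      have heq : (fun z : ℂˣ => ‖(z : ℂ) ^ (w i) * x i‖)
          = (fun r : ℝ => r ^ ((w i).toNat) * ‖x i‖) ∘ (fun z : ℂˣ => ‖(z : ℂ)‖) := by
        ext z
        simp only [Function.comp_apply, norm_mul, norm_zpow]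
        rw [← zpow_natCast, Int.toNat_of_nonneg hw.le]
      rw [heq]
      refine Tendsto.comp ?_ norm_tendsto
      exact (tendsto_pow_atTop (by omega)).atTop_mul_const (norm_pos_iff.mpr hx)
    exact not_tendsto_nhds_of_tendsto_atTop hnorm' _ hnorm
  -- canonical limit
  have hlim : (∀ i, 0 < w i → x i = 0) →
      Tendsto (fun z : ℂˣ => fun i => (z : ℂ) ^ (w i) * x i) unitsAtInfty
        (nhds (fun i => if w i = 0 then x i else 0)) := by
    intro hx
    rw [tendsto_pi_nhds]
    intro i
    rcases lt_trichotomy (w i) 0 with h | h | h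
    · simp only [h.ne, if_false]
      have := (zpow_neg_tendsto h).mul_const (x i)
      simpa using this
    · simp only [h, if_true, zpow_zero, one_mul]
      exact tendsto_const_nhds
    · simp only [h.ne', if_false, hx i h, mul_zero]
      exact tendsto_const_nhds
  constructor
  · constructor
    · rintro ⟨L, hL⟩; exact fwd L hL
    · intro hx; exact ⟨_, hlim hx⟩
  · intro L hL i
    have := tendsto_nhds_unique hL (hlim (fwd L hL))
    exact congrFun this i
end
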